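/- Let T = ∫⊕_X R(x) dμ(x) : V_J → V_{J'} be a decomposable operator and C > 0. Then ‖Tφ‖ ≥ C‖φ‖ for all φ ∈ V_J if and only if for a.e. x ∈ X, ‖R(x)v‖ ≥ C‖v‖ for all v ∈ J(x). -/

import Mathlib

open MeasureTheory
open scoped ENNReal NNReal

noncomputable section

section Aux
variable {X : Type*} [MeasurableSpace X]

/-- If all inner products with a fixed vector are measurable, the norm is measurable. -/
lemma measurable_norm_of_inner' {E : Type*} [NormedAddCommGroup E] [InnerProductSpace ℂ E]
    [TopologicalSpace.SeparableSpace E] {f : X → E}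
    (hf : ∀ v : E, Measurable fun x => (inner ℂ (f x) v : ℂ)) :
    Measurable fun x => ‖f x‖ := by
  have : Nonempty E := ⟨0⟩
  obtain ⟨d, hd⟩ := TopologicalSpace.exists_dense_seq E
  have key : ∀ x, ‖f x‖ =
      Real.sqrt (⨆ k, (2 * (inner ℂ (f x) (d k) : ℂ).re - ‖d k‖ ^ 2)) := by
    intro x
    set w := f x with hw
    have hterm : ∀ k, 2 * (inner ℂ w (d k) : ℂ).re - ‖d k‖ ^ 2 = ‖w‖ ^ 2 - ‖w - d k‖ ^ 2 := by
      intro k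
      have := @norm_sub_sq ℂ E _ _ _ w (d k)
      simp only [RCLike.re_to_complex] at this
      linarith
    have hbdd : BddAbove (Set.range fun k => 2 * (inner ℂ w (d k) : ℂ).re - ‖d k‖ ^ 2) := by
      refine ⟨‖w‖ ^ 2, ?_⟩
      rintro r ⟨k, rfl⟩
      dsimp only
      rw [hterm k]
      nlinarith [sq_nonneg ‖w - d k‖]
    have heq : ‖w‖ ^ 2 = ⨆ k, (2 * (inner ℂ w (d k) : ℂ).re - ‖d k‖ ^ 2) := by
      apply le_antisymm
      · apply le_of_forall_pos_le_add
        intro ε hε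
        obtain ⟨k, hk⟩ := Metric.denseRange_iff.1 hd w (Real.sqrt ε) (Real.sqrt_pos.2 hε)
        have h1 : ‖w - d k‖ ^ 2 < ε := by
          have h2 : ‖w - d k‖ < Real.sqrt ε := by rwa [← dist_eq_norm]
          nlinarith [norm_nonneg (w - d k), Real.sq_sqrt hε.le, Real.sqrt_nonneg ε]
        have := le_ciSup hbdd k
        rw [hterm k] at this
        linarith
      · refine ciSup_le fun k => ?_
        rw [hterm k]
        nlinarith [sq_nonneg ‖w - d k‖]
    have : ‖w‖ = Real.sqrt (‖w‖ ^ 2) := by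
      rw [Real.sqrt_sq (norm_nonneg w)]
    rw [this, heq]
  simp only [key]
  apply Measurable.comp Real.continuous_sqrt.measurable
  apply Measurable.iSup
  intro k
  exact ((Complex.measurable_re.comp (hf (d k))).const_mul 2).sub measurable_const

/-- Pettis measurability: weakly measurable implies strongly measurable, for a
separable Hilbert space target. -/
lemma stronglyMeasurable_of_inner' {E : Type*} [NormedAddCommGroup E] [InnerProductSpace ℂ E]
    [TopologicalSpace.SeparableSpace E] {f : X → E}
    (hf : ∀ v : E, Measurable fun x => (inner ℂ (f x) v : ℂ)) :
    StronglyMeasurable f := by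
  borelize E
  haveI : SecondCountableTopology E := by
    exact UniformSpace.secondCountable_of_separable E
  refine Measurable.stronglyMeasurable ?_
  have hball : ∀ (c : E) (r : ℝ), MeasurableSet (f ⁻¹' Metric.ball c r) := by
    intro c r
    have hm : Measurable fun x => ‖f x - c‖ :=
      measurable_norm_of_inner' (f := fun x => f x - c) (fun v => by
        simp only [inner_sub_left]
        exact (hf v).sub measurable_const)
    have : f ⁻¹' Metric.ball c r = {x | ‖f x - c‖ < r} := by
      ext x; simp [Metric.mem_ball, dist_eq_norm]
    rw [this]
    exact measurableSet_lt hm measurable_const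
  apply measurable_of_isOpen
  intro U hU
  have : Nonempty E := ⟨0⟩
  obtain ⟨d, hd⟩ := TopologicalSpace.exists_dense_seq E
  have hrep : U = ⋃ (p : ℕ × ℚ) (_ : Metric.ball (d p.1) (p.2 : ℝ) ⊆ U),
      Metric.ball (d p.1) (p.2 : ℝ) := by
    apply Set.Subset.antisymm
    · intro y hy
      obtain ⟨ε, hε, hball'⟩ := Metric.isOpen_iff.1 hU y hy
      obtain ⟨q, hq0, hqε⟩ := exists_rat_btwn (by linarith : (0:ℝ) < ε / 2)
      have hq0' : (0:ℝ) < q := hq0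
      obtain ⟨k, hk⟩ := Metric.denseRange_iff.1 hd y (q : ℝ) hq0'
      refine Set.mem_iUnion.2 ⟨(k, q), Set.mem_iUnion.2 ⟨?_, ?_⟩⟩
      · intro z hz
        apply hball'
        have : dist z y ≤ dist z (d k) + dist (d k) y := dist_triangle _ _ _
        rw [Metric.mem_ball] at hz ⊢
        rw [dist_comm] at hk
        linarith
      · rw [Metric.mem_ball]; exact hk
    · intro y hy
      simp only [Set.mem_iUnion] at hy
      obtain ⟨p, hp, hyp⟩ := hy
      exact hp hyp
  rw [hrep, Set.preimage_iUnion]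
  refine MeasurableSet.iUnion fun p => ?_
  rw [Set.preimage_iUnion]
  exact MeasurableSet.iUnion fun hp => hball _ _

end Aux

def VJ {X : Type*} [MeasurableSpace X] (μ : Measure X)
    {H : Type*} [NormedAddCommGroup H] [InnerProductSpace ℂ H]
    (J : X → Submodule ℂ H) : Submodule ℂ (Lp H 2 μ) where
  carrier := {φ | ∀ᵐ x ∂μ, φ x ∈ J x}
  add_mem' := by
    intro a b ha hb
    simp only [Set.mem_setOf_eq] at ha hb ⊢
    filter_upwards [Lp.coeFn_add a b, ha, hb] with x h1 h2 h3
    rw [h1]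
    exact (J x).add_mem h2 h3
  zero_mem' := by
    filter_upwards [Lp.coeFn_zero H 2 μ] with x h1
    rw [h1]
    exact (J x).zero_mem
  smul_mem' := by
    intro c f hf
    show ∀ᵐ x ∂μ, (c • f : Lp H 2 μ) x ∈ J x
    filter_upwards [Lp.coeFn_smul c f, hf] with x h1 h2
    rw [h1]
    exact (J x).smul_mem c h2

theorem decomposable_bounded_below_iff
    {X : Type*} [MeasurableSpace X] (μ : Measure X) [SigmaFinite μ]
    [TopologicalSpace.SeparableSpace (Lp ℂ 2 μ)]
    {H H' : Type*} [NormedAddCommGroup H] [InnerProductSpace ℂ H] [CompleteSpace H]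
    [SecondCountableTopology H]
    [NormedAddCommGroup H'] [InnerProductSpace ℂ H'] [CompleteSpace H']
    [SecondCountableTopology H']
    (J : X → Submodule ℂ H) (J' : X → Submodule ℂ H')
    [∀ x, CompleteSpace ↥(J x)] [∀ x, CompleteSpace ↥(J' x)]
    (hJm : ∀ u v : H, Measurable fun x => (inner ℂ (((J x).orthogonalProjectionOnto u : H)) v : ℂ))
    (hJ'm : ∀ u v : H', Measurable fun x => (inner ℂ (((J' x).orthogonalProjectionOnto u : H')) v : ℂ))
    (R : (x : X) → (↥(J x) →L[ℂ] ↥(J' x)))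
    (hRm : ∀ (u : H) (v : H'),
      Measurable fun x => (inner ℂ ((R x ((J x).orthogonalProjectionOnto u) : H')) v : ℂ))
    (hRb : ∃ C, ∀ᵐ x ∂μ, ‖R x‖ ≤ C)
    (T : ↥(VJ μ J) →L[ℂ] ↥(VJ μ J'))
    (hT : ∀ φ : ↥(VJ μ J), ∀ᵐ x ∂μ, ∀ hx : (φ : Lp H 2 μ) x ∈ J x,
      ((T φ : Lp H' 2 μ) x) = (R x ⟨(φ : Lp H 2 μ) x, hx⟩ : H'))
    (C : ℝ) (hC : 0 < C) :
    (∀ φ : ↥(VJ μ J), C * ‖φ‖ ≤ ‖T φ‖) ↔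
      (∀ᵐ x ∂μ, ∀ v : ↥(J x), C * ‖v‖ ≤ ‖R x v‖) := by
  have hCnorm : ‖(C : ℂ)‖ = C := by
    rw [Complex.norm_real]
    exact Real.norm_of_nonneg hC.le
  constructor
  · -- hard direction
    intro hb
    by_contra hcon
    rw [ae_iff] at hcon
    have hne : Nonempty H := ⟨0⟩
    obtain ⟨d, hd⟩ := TopologicalSpace.exists_dense_seq H
    -- the fiberwise sections
    set σ : ℕ → (x : X) → ↥(J x) := fun n x => (J x).orthogonalProjectionOnto (d n) with hσ
    have hσm : ∀ n, Measurable fun x => ‖(σ n x : H)‖ := fun n =>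
      measurable_norm_of_inner' (fun v => hJm (d n) v)
    have hRσm : ∀ n, Measurable fun x => ‖(R x (σ n x) : H')‖ := fun n =>
      measurable_norm_of_inner' (fun v => hRm (d n) v)
    set Bset : ℕ → Set X := fun n => {x | ‖(R x (σ n x) : H')‖ < C * ‖(σ n x : H)‖} with hBdef
    have hBmeas : ∀ n, MeasurableSet (Bset n) :=
      fun n => measurableSet_lt (hRσm n) ((hσm n).const_mul C)
    have hσnorm : ∀ n x, ‖(σ n x : H)‖ ≤ ‖d n‖ := by
      intro n x
      calc ‖(σ n x : H)‖ = ‖σ n x‖ := by rw [Submodule.norm_coe]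
        _ ≤ ‖(J x).orthogonalProjectionOnto‖ * ‖d n‖ :=
            ((J x).orthogonalProjectionOnto).le_opNorm (d n)
        _ ≤ 1 * ‖d n‖ := by
            gcongr
            exact Submodule.orthogonalProjectionOnto_norm_le _
        _ = ‖d n‖ := one_mul _
    -- the bad set is covered by the Bset's
    have hsub : {x | ¬ ∀ v : ↥(J x), C * ‖v‖ ≤ ‖R x v‖} ⊆ ⋃ n, Bset n := by
      intro x hx
      simp only [Set.mem_setOf_eq, not_forall, not_le] at hx
      obtain ⟨v, hv⟩ := hx
      set M := ‖R x‖ with hM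
      have hM0 : 0 ≤ M := norm_nonneg (R x)
      have hεpos : 0 < C * ‖v‖ - ‖R x v‖ := by linarith
      set δ := (C * ‖v‖ - ‖R x v‖) / (M + C + 1) with hδdef
      have hδpos : 0 < δ := div_pos hεpos (by linarith)
      obtain ⟨n, hn⟩ := Metric.denseRange_iff.1 hd (v : H) δ hδpos
      have hlip : ‖σ n x - v‖ < δ := by
        have h1 : σ n x - v = (J x).orthogonalProjectionOnto (d n - (v : H)) := by
          rw [map_sub, Submodule.orthogonalProjectionOnto_mem_subspace_eq_self]
        rw [h1]
        calc ‖(J x).orthogonalProjectionOnto (d n - (v : H))‖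
            ≤ ‖(J x).orthogonalProjectionOnto‖ * ‖d n - (v : H)‖ :=
              ((J x).orthogonalProjectionOnto).le_opNorm _
          _ ≤ 1 * ‖d n - (v : H)‖ := by
              gcongr; exact Submodule.orthogonalProjectionOnto_norm_le _
          _ = ‖d n - (v : H)‖ := one_mul _
          _ < δ := by rwa [← dist_eq_norm, dist_comm]
      refine Set.mem_iUnion.2 ⟨n, ?_⟩
      show ‖(R x (σ n x) : H')‖ < C * ‖(σ n x : H)‖
      have e1 : ‖R x (σ n x)‖ ≤ ‖R x v‖ + M * δ := by
        have h2 : ‖R x (σ n x) - R x v‖ ≤ M * δ := by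
          rw [← map_sub]
          calc ‖R x (σ n x - v)‖ ≤ M * ‖σ n x - v‖ := (R x).le_opNorm _
            _ ≤ M * δ := by nlinarith
        calc ‖R x (σ n x)‖ ≤ ‖R x v‖ + ‖R x (σ n x) - R x v‖ :=
              norm_le_norm_add_norm_sub' _ _
          _ ≤ ‖R x v‖ + M * δ := by linarith
      have e2 : ‖v‖ - δ ≤ ‖σ n x‖ := by
        have := norm_sub_norm_le v (σ n x)
        have h3 : ‖v - σ n x‖ < δ := by rwa [norm_sub_rev] at hlip
        linarith
      have hδmul : δ * (M + C + 1) = C * ‖v‖ - ‖R x v‖ :=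
        div_mul_cancel₀ _ (by linarith)
      have e3 : ‖(R x (σ n x) : H')‖ = ‖R x (σ n x)‖ := Submodule.norm_coe _
      have e4 : ‖(σ n x : H)‖ = ‖σ n x‖ := Submodule.norm_coe _
      rw [e3, e4]
      nlinarith
    -- some Bset has positive measure
    have hexn : ∃ n, μ (Bset n) ≠ 0 := by
      by_contra hall
      push_neg at hall
      exact hcon (measure_mono_null hsub (measure_iUnion_null hall))
    obtain ⟨n, hn0⟩ := hexn
    obtain ⟨Eset, hEmeas, hEB, hEpos, hEfin⟩ :=
      Measure.exists_subset_measure_lt_top (hBmeas n) (pos_iff_ne_zero.2 hn0)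
    -- the test function
    set s : X → H := Eset.indicator (fun x => (σ n x : H)) with hsdef
    have hsm : StronglyMeasurable s :=
      (stronglyMeasurable_of_inner' (fun v => hJm (d n) v)).indicator hEmeas
    have hmem : MemLp s 2 μ := by
      refine MemLp.of_le (memLp_indicator_const 2 hEmeas (d n) (Or.inr hEfin.ne))
        hsm.aestronglyMeasurable (Filter.Eventually.of_forall fun x => ?_)
      by_cases hx : x ∈ Eset
      · simp only [hsdef, Set.indicator_of_mem hx]
        exact hσnorm n x
      · simp [hsdef, Set.indicator_of_notMem hx]
    set φ0 : Lp H 2 μ := hmem.toLp s with hφ0def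
    have hφ0 : φ0 =ᵐ[μ] s := hmem.coeFn_toLp
    have hφmem : φ0 ∈ VJ μ J := by
      show ∀ᵐ x ∂μ, φ0 x ∈ J x
      filter_upwards [hφ0] with x hx
      rw [hx]
      by_cases hxE : x ∈ Eset
      · simp only [hsdef, Set.indicator_of_mem hxE]
        exact SetLike.coe_mem _
      · simp only [hsdef, Set.indicator_of_notMem hxE]
        exact (J x).zero_mem
    set φ : ↥(VJ μ J) := ⟨φ0, hφmem⟩ with hφdef
    set ψ : Lp H 2 μ := (C : ℂ) • φ0 with hψdef
    -- pointwise comparisons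
    have hkey : ∀ᵐ x ∂μ,
        ((‖(T φ : Lp H' 2 μ) x‖₊ : ℝ≥0∞) ^ (2:ℝ) ≤ (‖ψ x‖₊ : ℝ≥0∞) ^ (2:ℝ)) ∧
        (x ∈ Eset → (‖(T φ : Lp H' 2 μ) x‖₊ : ℝ≥0∞) ^ (2:ℝ) < (‖ψ x‖₊ : ℝ≥0∞) ^ (2:ℝ)) := by
      filter_upwards [hT φ, hφ0, Lp.coeFn_smul (C : ℂ) φ0] with x hx1 hx2 hx3
      have hx2' : (φ : Lp H 2 μ) x = s x := hx2
      have hmemx : (φ : Lp H 2 μ) x ∈ J x := by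
        rw [hx2']
        by_cases hxE : x ∈ Eset
        · simp only [hsdef, Set.indicator_of_mem hxE]; exact SetLike.coe_mem _
        · simp only [hsdef, Set.indicator_of_notMem hxE]; exact (J x).zero_mem
      have hTx : (T φ : Lp H' 2 μ) x = (R x ⟨(φ : Lp H 2 μ) x, hmemx⟩ : H') := hx1 hmemx
      have hψx : ‖ψ x‖ = C * ‖s x‖ := by
        rw [hψdef, hx3, Pi.smul_apply, norm_smul, hCnorm]
        congr 1
        exact congrArg norm hx2
      by_cases hxE : x ∈ Eset
      · have hsx : s x = (σ n x : H) := Set.indicator_of_mem hxE _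
        have hsubt : (⟨(φ : Lp H 2 μ) x, hmemx⟩ : ↥(J x)) = σ n x :=
          Subtype.ext (by simpa using hx2'.trans hsx)
        have hlt : ‖(T φ : Lp H' 2 μ) x‖ < ‖ψ x‖ := by
          rw [hTx, hsubt, hψx, hsx]
          exact hEB hxE
        have hlt' : (‖(T φ : Lp H' 2 μ) x‖₊ : ℝ≥0∞) < (‖ψ x‖₊ : ℝ≥0∞) := by
          rw [ENNReal.coe_lt_coe, ← NNReal.coe_lt_coe, coe_nnnorm, coe_nnnorm]
          exact hlt
        have := ENNReal.rpow_lt_rpow hlt' (by norm_num : (0:ℝ) < 2)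
        exact ⟨this.le, fun _ => this⟩
      · have hsx : s x = 0 := Set.indicator_of_notMem hxE _
        have hsubt : (⟨(φ : Lp H 2 μ) x, hmemx⟩ : ↥(J x)) = 0 :=
          Subtype.ext (by simpa using hx2'.trans hsx)
        have hz : ‖(T φ : Lp H' 2 μ) x‖ = 0 := by
          rw [hTx, hsubt, map_zero]
          simp
        have hz' : ‖ψ x‖ = 0 := by rw [hψx, hsx]; simp
        constructor
        · have hnn : ‖(T φ : Lp H' 2 μ) x‖₊ = ‖ψ x‖₊ :=
            NNReal.coe_injective (by rw [coe_nnnorm, coe_nnnorm, hz, hz'])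
          rw [hnn]
        · intro hxE'; exact absurd hxE' hxE
    -- integral comparison
    have hg : AEMeasurable (fun x => (‖ψ x‖₊ : ℝ≥0∞) ^ (2:ℝ)) μ := by
      exact ((Lp.aestronglyMeasurable ψ).enorm).pow_const _
    have htop : ∫⁻ x, (‖(T φ : Lp H' 2 μ) x‖₊ : ℝ≥0∞) ^ (2:ℝ) ∂μ ≠ ∞ := by
      have h1 := Lp.eLpNorm_ne_top (T φ : Lp H' 2 μ)
      rw [eLpNorm_eq_lintegral_rpow_enorm_toReal (by norm_num) (by norm_num)] at h1
      intro hcontra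
      rw [show ((2:ℝ≥0∞).toReal) = (2:ℝ) by simp] at h1
      rw [show (∫⁻ x, ‖(T φ : Lp H' 2 μ) x‖ₑ ^ (2:ℝ) ∂μ) = ∞ from hcontra] at h1
      simp at h1
    have hglt : ∫⁻ x, (‖(T φ : Lp H' 2 μ) x‖₊ : ℝ≥0∞) ^ (2:ℝ) ∂μ <
        ∫⁻ x, (‖ψ x‖₊ : ℝ≥0∞) ^ (2:ℝ) ∂μ := by
      refine lintegral_strict_mono_of_ae_le_of_ae_lt_on hg htop ?_ hEpos.ne' ?_
      · exact hkey.mono fun x hx => hx.1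
      · exact hkey.mono fun x hx => hx.2
    have h1 : eLpNorm (⇑(T φ : Lp H' 2 μ)) 2 μ < eLpNorm (⇑ψ) 2 μ := by
      rw [eLpNorm_eq_lintegral_rpow_enorm_toReal (by norm_num) (by norm_num),
        eLpNorm_eq_lintegral_rpow_enorm_toReal (by norm_num) (by norm_num),
        show ((2:ℝ≥0∞).toReal) = (2:ℝ) by simp]
      exact ENNReal.rpow_lt_rpow hglt (by norm_num)
    have h2 : ‖(T φ : Lp H' 2 μ)‖ < ‖ψ‖ := by
      rw [Lp.norm_def, Lp.norm_def]
      exact ENNReal.toReal_strict_mono (Lp.eLpNorm_ne_top ψ) h1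
    have h3 : ‖ψ‖ = C * ‖φ‖ := by
      rw [hψdef, norm_smul, hCnorm]; rfl
    have h4 := hb φ
    have h5 : ‖T φ‖ = ‖(T φ : Lp H' 2 μ)‖ := rfl
    rw [h5] at h4
    linarith
  · -- easy direction
    intro hae φ
    have h2 : ∀ᵐ x ∂μ, (φ : Lp H 2 μ) x ∈ J x := φ.2
    have hle : ∀ᵐ x ∂μ, ‖((C : ℂ) • (φ : Lp H 2 μ)) x‖ ≤ ‖(T φ : Lp H' 2 μ) x‖ := by
      filter_upwards [hT φ, h2, hae, Lp.coeFn_smul (C : ℂ) (φ : Lp H 2 μ)]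
        with x hx1 hx2 hx3 hx4
      rw [hx4, hx1 hx2]
      have hv := hx3 ⟨(φ : Lp H 2 μ) x, hx2⟩
      rw [Pi.smul_apply, norm_smul, hCnorm]
      calc C * ‖(φ : Lp H 2 μ) x‖ = C * ‖(⟨(φ : Lp H 2 μ) x, hx2⟩ : ↥(J x))‖ := by
            simp [Submodule.coe_norm]
        _ ≤ ‖R x ⟨(φ : Lp H 2 μ) x, hx2⟩‖ := hv
        _ = ‖(R x ⟨(φ : Lp H 2 μ) x, hx2⟩ : H')‖ := (Submodule.norm_coe _).symm
    calc C * ‖φ‖ = ‖(C : ℂ) • (φ : Lp H 2 μ)‖ := by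
          rw [norm_smul, hCnorm]; rfl
      _ ≤ ‖(T φ : Lp H' 2 μ)‖ := Lp.norm_le_norm_of_ae_le hle
      _ = ‖T φ‖ := rfl
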